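/- Let H be a real Hilbert space, r > 0, and let S be a finite nonempty subset of the sphere {x ∈ H : ‖x‖ = r}. Define Ψ(y) := −min_{x∈S} ‖y−x‖²/2 and, for y ∈ H, the local (Fréchet) subdifferential ∂Ψ(y) := {ζ ∈ H : liminf_{y'→y} (Ψ(y') − Ψ(y) − ⟨ζ, y'−y⟩)/‖y'−y‖ ≥ 0}. Let Proj_S(y) := {x ∈ S : ‖y−x‖ = min_{x'∈S} ‖y−x'‖}. Then ∂Ψ(y) = {z − y : z ∈ conv(Proj_S(y))}, and the unique element of minimal norm of ∂Ψ(y) is p − y, where p is the unique point of the convex hull conv(Proj_S(y)) closest to y. -/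

import Mathlib

open scoped Classical RealInnerProductSpace

noncomputable section

variable {H : Type*} [NormedAddCommGroup H] [InnerProductSpace ℝ H]

/-- `dist(y,S) = min_{x∈S} ‖y−x‖` (as the infimum of a finite nonempty set of reals). -/
def distS (S : Finset H) (y : H) : ℝ :=
  sInf ((fun x => ‖y - x‖) '' ↑S)

/-- `Proj_S(y)`, the set of closest points of `S` to `y`. -/
def ProjS (S : Finset H) (y : H) : Finset H :=
  S.filter fun x => ‖y - x‖ = distS S y

/-- `Ψ(y) = −min_{x∈S} ‖y−x‖²/2`. -/
def PsiFn (S : Finset H) (y : H) : ℝ :=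
  -sInf ((fun x => ‖y - x‖ ^ 2 / 2) '' ↑S)

/-- The local (Fréchet) subdifferential of `Ψ` at `y`:
`∂Ψ(y) = {ζ : liminf_{y'→y} (Ψ(y') − Ψ(y) − ⟪ζ, y'−y⟫)/‖y'−y‖ ≥ 0}`. -/
def subdiff (S : Finset H) (y : H) : Set H :=
  {ζ : H | 0 ≤ Filter.liminf
      (fun y' => (PsiFn S y' - PsiFn S y - ⟪ζ, y' - y⟫) / ‖y' - y‖)
      (nhdsWithin y {y}ᶜ)}

/-! ### Auxiliary lemmas -/

lemma neg_le_psi (S : Finset H) {x : H} (hx : x ∈ S) (y' : H) :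
    -(‖y' - x‖ ^ 2 / 2) ≤ PsiFn S y' := by
  have : sInf ((fun x => ‖y' - x‖ ^ 2 / 2) '' ↑S) ≤ ‖y' - x‖ ^ 2 / 2 :=
    csInf_le (Set.Finite.bddBelow (S.finite_toSet.image _)) ⟨x, hx, rfl⟩
  unfold PsiFn; linarith

lemma psi_le (S : Finset H) (hS : S.Nonempty) (y' : H) {c : ℝ}
    (h : ∀ x ∈ S, -(‖y' - x‖ ^ 2 / 2) ≤ c) : PsiFn S y' ≤ c := by
  have : -c ≤ sInf ((fun x => ‖y' - x‖ ^ 2 / 2) '' ↑S) := by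
    apply le_csInf ((Finset.coe_nonempty.mpr hS).image _)
    rintro b ⟨x, hx, rfl⟩
    have := h x hx; linarith
  unfold PsiFn; linarith

lemma distS_le (S : Finset H) {x : H} (hx : x ∈ S) (y : H) :
    distS S y ≤ ‖y - x‖ :=
  csInf_le (Set.Finite.bddBelow (S.finite_toSet.image _)) ⟨x, hx, rfl⟩

lemma projS_nonempty (S : Finset H) (hS : S.Nonempty) (y : H) :
    (ProjS S y).Nonempty := by
  have hne : ((fun x => ‖y - x‖) '' (↑S : Set H)).Nonempty :=
    (Finset.coe_nonempty.mpr hS).image _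
  obtain ⟨x, hx, hx'⟩ := hne.csInf_mem (S.finite_toSet.image _)
  exact ⟨x, Finset.mem_filter.2 ⟨hx, hx'⟩⟩

lemma mem_projS {S : Finset H} {y x : H} :
    x ∈ ProjS S y ↔ x ∈ S ∧ ‖y - x‖ = distS S y := Finset.mem_filter

lemma psi_eq_of_proj (S : Finset H) (hS : S.Nonempty) {x : H} {y : H}
    (hx : x ∈ ProjS S y) : PsiFn S y = -(‖y - x‖ ^ 2 / 2) := by
  obtain ⟨hxS, hxd⟩ := mem_projS.1 hx
  refine le_antisymm ?_ (neg_le_psi S hxS y)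
  apply psi_le S hS
  intro x' hx'
  have h1 : ‖y - x‖ ≤ ‖y - x'‖ := hxd ▸ distS_le S hx' y
  have h2 : (0:ℝ) ≤ ‖y - x‖ := norm_nonneg _
  nlinarith

/-- Key inequality: for `z` in the convex hull of the projections,
`Ψ(y') − Ψ(y) − ⟪z − y, y' − y⟫ ≥ −‖y'−y‖²/2`. -/
lemma key_ineq (S : Finset H) (hS : S.Nonempty) (y : H) {z : H}
    (hz : z ∈ convexHull ℝ (↑(ProjS S y) : Set H)) (y' : H) :
    -(‖y' - y‖ ^ 2 / 2) ≤ PsiFn S y' - PsiFn S y - ⟪z - y, y' - y⟫ := by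
  set w := y' - y with hw
  have hlin : IsLinearMap ℝ (fun v : H => ⟪w, v⟫) :=
    ⟨fun a b => inner_add_right _ _ _, fun c a => real_inner_smul_right _ _ _⟩
  have hsub : (↑(ProjS S y) : Set H) ⊆
      {v : H | ⟪w, v⟫ ≤ PsiFn S y' - PsiFn S y + ‖w‖ ^ 2 / 2 + ⟪w, y⟫} := by
    intro x hx
    have hxP : x ∈ ProjS S y := Finset.mem_coe.1 hx
    have hxS : x ∈ S := (mem_projS.1 hxP).1
    have h1 : -(‖y' - x‖ ^ 2 / 2) ≤ PsiFn S y' := neg_le_psi S hxS y'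
    have h2 : PsiFn S y = -(‖y - x‖ ^ 2 / 2) := psi_eq_of_proj S hS hxP
    have hyx : y' - x = (y - x) + w := by rw [hw]; abel
    have hexp : ‖y' - x‖ ^ 2 = ‖y - x‖ ^ 2 + 2 * ⟪y - x, w⟫ + ‖w‖ ^ 2 := by
      rw [hyx, norm_add_sq_real (y - x) w]
    have hinner : ⟪y - x, w⟫ = ⟪w, y⟫ - ⟪w, x⟫ := by
      rw [real_inner_comm]; exact inner_sub_right _ _ _
    simp only [Set.mem_setOf_eq]
    linarith
  have hzK := convexHull_min hsub (convex_halfSpace_le hlin _) hz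
  simp only [Set.mem_setOf_eq] at hzK
  have hzy : ⟪z - y, w⟫ = ⟪w, z⟫ - ⟪w, y⟫ := by
    rw [real_inner_comm]; exact inner_sub_right _ _ _
  linarith

set_option maxHeartbeats 2000000 in
/-- Proposition C.3 of the paper. Let `H` be a real Hilbert space and `S` a
finite nonempty subset of the sphere of radius `r > 0` centered at the origin. Then the local
subdifferential of `Ψ(y) = −min_{x∈S}‖y−x‖²/2` at `y` equals
`{z − y : z ∈ conv(Proj_S(y))}`, and its unique element of minimal norm is `p − y`, where `p`
is the unique point of `conv(Proj_S(y))` closest to `y`. -/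
theorem statement13 [CompleteSpace H] (r : ℝ) (hr : 0 < r)
    (S : Finset H) (hS : S.Nonempty) (hnorm : ∀ x ∈ S, ‖x‖ = r) (y : H) :
    subdiff S y = (fun z => z - y) '' (convexHull ℝ ↑(ProjS S y))
      ∧ ∀ p : H, p ∈ convexHull ℝ (↑(ProjS S y) : Set H) →
          (∀ z ∈ convexHull ℝ (↑(ProjS S y) : Set H), ‖y - p‖ ≤ ‖y - z‖) →
          (p - y ∈ subdiff S y
            ∧ (∀ ζ ∈ subdiff S y, ‖p - y‖ ≤ ‖ζ‖)
            ∧ ∀ ζ ∈ subdiff S y, ‖ζ‖ = ‖p - y‖ → ζ = p - y) := by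
  classical
  set P := ProjS S y with hPdef
  set C := convexHull ℝ (↑P : Set H) with hCdef
  have hCconv : Convex ℝ C := convex_convexHull ℝ _
  obtain ⟨x₀, hx₀P⟩ := projS_nonempty S hS y
  have hx₀S : x₀ ∈ S := (mem_projS.1 hx₀P).1
  have hx₀C : x₀ ∈ C := subset_convexHull ℝ _ (Finset.mem_coe.2 hx₀P)
  -- H is nontrivial
  haveI : Nontrivial H := by
    obtain ⟨xs, hxs⟩ := hS
    refine ⟨xs, 0, fun h => ?_⟩
    have h' := hnorm xs hxs
    rw [h, norm_zero] at h'
    exact absurd h'.symm (ne_of_gt hr)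
  haveI hyNB : (nhdsWithin y ({y}ᶜ : Set H)).NeBot := Real.punctured_nhds_module_neBot y
  -- the quotient function for a candidate subgradient ζ and its eventual lower bound set
  set q : H → H → ℝ :=
    fun ζ y' => (PsiFn S y' - PsiFn S y - ⟪ζ, y' - y⟫) / ‖y' - y‖ with hqdef
  set A : H → Set ℝ :=
    fun ζ => {a : ℝ | ∀ᶠ y' in nhdsWithin y ({y}ᶜ : Set H), a ≤ q ζ y'} with hAdef
  have hmem_subdiff : ∀ ζ : H, ζ ∈ subdiff S y ↔ 0 ≤ sSup (A ζ) := by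
    intro ζ
    unfold subdiff
    rw [Set.mem_setOf_eq, Filter.liminf_eq]
  -- eventually `y' ≠ y` and eventually in small balls
  have hev_ne : ∀ᶠ y' in nhdsWithin y ({y}ᶜ : Set H), y' ≠ y := by
    filter_upwards [self_mem_nhdsWithin] with y' hy'
    exact hy'
  have hev_ball : ∀ ε : ℝ, 0 < ε →
      ∀ᶠ y' in nhdsWithin y ({y}ᶜ : Set H), ‖y' - y‖ < ε := by
    intro ε hε
    have hb : Metric.ball y ε ∈ nhdsWithin y ({y}ᶜ : Set H) :=
      nhdsWithin_le_nhds (Metric.ball_mem_nhds y hε)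
    filter_upwards [hb] with y' hy'
    rwa [Metric.mem_ball, dist_eq_norm] at hy'
  -- `A ζ` is nonempty
  have hAne : ∀ ζ : H, (A ζ).Nonempty := by
    intro ζ
    refine ⟨-1 - ‖x₀ - y - ζ‖, ?_⟩
    simp only [hAdef, Set.mem_setOf_eq]
    filter_upwards [hev_ne, hev_ball 2 (by norm_num)] with y' hne hball
    have hwpos : 0 < ‖y' - y‖ := norm_pos_iff.2 (sub_ne_zero.2 hne)
    have hkey := key_ineq S hS y hx₀C y'
    have hsplit : ⟪x₀ - y - ζ, y' - y⟫ = ⟪x₀ - y, y' - y⟫ - ⟪ζ, y' - y⟫ :=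
      inner_sub_left _ _ _
    have hcs : -(‖x₀ - y - ζ‖ * ‖y' - y‖) ≤ ⟪x₀ - y - ζ, y' - y⟫ :=
      neg_le_of_abs_le (abs_real_inner_le_norm _ _)
    simp only [hqdef]
    rw [le_div_iff₀ hwpos]
    nlinarith [norm_nonneg (y' - y), norm_nonneg (x₀ - y - ζ)]
  -- `A ζ` is bounded above
  have hAbdd : ∀ ζ : H, BddAbove (A ζ) := by
    intro ζ
    refine ⟨(1 + ‖y‖ + r) + 1 + ‖ζ‖, fun a ha => ?_⟩
    have hub : ∀ᶠ y' in nhdsWithin y ({y}ᶜ : Set H),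
        q ζ y' ≤ (1 + ‖y‖ + r) + 1 + ‖ζ‖ := by
      filter_upwards [hev_ne, hev_ball 1 (by norm_num)] with y' hne hball
      have hwpos : 0 < ‖y' - y‖ := norm_pos_iff.2 (sub_ne_zero.2 hne)
      obtain ⟨x', hx'⟩ := projS_nonempty S hS y'
      have hx'S : x' ∈ S := (mem_projS.1 hx').1
      have h1 : PsiFn S y' = -(‖y' - x'‖ ^ 2 / 2) := psi_eq_of_proj S hS hx'
      have h2 : -(‖y - x'‖ ^ 2 / 2) ≤ PsiFn S y := neg_le_psi S hx'S y
      have h3 : ‖y - x'‖ ≤ ‖y' - y‖ + ‖y' - x'‖ := by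
        have := dist_triangle y y' x'
        rw [dist_eq_norm, dist_eq_norm, dist_eq_norm] at this
        rw [norm_sub_rev y y'] at this
        exact this
      have h4 : ‖y' - x'‖ ≤ ‖y' - y‖ + ‖y‖ + r := by
        have t1 : ‖y' - x'‖ ≤ ‖y' - y‖ + ‖y - x'‖ := by
          have := dist_triangle y' y x'
          rw [dist_eq_norm, dist_eq_norm, dist_eq_norm] at this
          exact this
        have t2 : ‖y - x'‖ ≤ ‖y‖ + ‖x'‖ := norm_sub_le _ _
        rw [hnorm x' hx'S] at t2
        linarith
      have hcs : -(‖ζ‖ * ‖y' - y‖) ≤ ⟪ζ, y' - y⟫ :=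
        neg_le_of_abs_le (abs_real_inner_le_norm _ _)
      simp only [hqdef]
      rw [div_le_iff₀ hwpos]
      nlinarith [norm_nonneg (y' - x'), norm_nonneg (y - x'), norm_nonneg (y' - y),
        norm_nonneg y, hr.le]
    simp only [hAdef, Set.mem_setOf_eq] at ha
    obtain ⟨y', hy1, hy2⟩ := (ha.and hub).exists
    linarith
  -- directional inequality for elements of the subdifferential
  have hdir : ∀ ζ ∈ subdiff S y, ∀ d : H, d ≠ 0 → ∃ x ∈ P, ⟪ζ, d⟫ ≤ ⟪x - y, d⟫ := by
    intro ζ hζ d hd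
    obtain ⟨xm, hxmP, hxm⟩ := Finset.exists_max_image P (fun x => ⟪x - y, d⟫) ⟨x₀, hx₀P⟩
    have hxmS : xm ∈ S := (mem_projS.1 hxmP).1
    set m := ⟪xm - y, d⟫ with hmdef
    refine ⟨xm, hxmP, ?_⟩
    have hdpos : 0 < ‖d‖ := norm_pos_iff.2 hd
    -- inner product bounds on the sphere
    have hB : ∀ x ∈ S, |⟪x - y, d⟫| ≤ (r + ‖y‖) * ‖d‖ := by
      intro x hx
      have t1 : |⟪x - y, d⟫| ≤ ‖x - y‖ * ‖d‖ := abs_real_inner_le_norm _ _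
      have t2 : ‖x - y‖ ≤ ‖x‖ + ‖y‖ := norm_sub_le _ _
      rw [hnorm x hx] at t2
      nlinarith
    -- the expansion used for points of `P`
    have hPbr : ∀ t : ℝ, 0 < t → ∀ x ∈ P, -(‖y + t • d - x‖ ^ 2 / 2) ≤ PsiFn S y + t * m := by
      intro t ht x hxP
      have hxS : x ∈ S := (mem_projS.1 hxP).1
      have hrw : y + t • d - x = (y - x) + t • d := by abel
      have hexp : ‖y + t • d - x‖ ^ 2
          = ‖y - x‖ ^ 2 + 2 * ⟪y - x, t • d⟫ + ‖t • d‖ ^ 2 := by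
        rw [hrw, norm_add_sq_real]
      have hin : ⟪y - x, t • d⟫ = -(t * ⟪x - y, d⟫) := by
        rw [real_inner_smul_right]
        have : ⟪y - x, d⟫ = -⟪x - y, d⟫ := by
          rw [show y - x = -(x - y) by abel, inner_neg_left]
        rw [this]; ring
      have hpsi : PsiFn S y = -(‖y - x‖ ^ 2 / 2) := psi_eq_of_proj S hS hxP
      have hle : ⟪x - y, d⟫ ≤ m := hxm x hxP
      have hsq : (0:ℝ) ≤ ‖t • d‖ ^ 2 := sq_nonneg _
      nlinarith [mul_le_mul_of_nonneg_left hle ht.le]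
    -- claim: Ψ(y + t d) ≤ Ψ(y) + t m for small positive t
    have hclaim : ∃ t₀ : ℝ, 0 < t₀ ∧ ∀ t : ℝ, 0 < t → t ≤ t₀ →
        PsiFn S (y + t • d) ≤ PsiFn S y + t * m := by
      by_cases hSP : (S \ P).Nonempty
      · obtain ⟨xδ, hxδ, hδmin⟩ :=
          Finset.exists_min_image (S \ P) (fun x => ‖y - x‖ ^ 2 / 2) hSP
        have hxδS : xδ ∈ S := (Finset.mem_sdiff.1 hxδ).1
        have hxδnP : xδ ∉ P := (Finset.mem_sdiff.1 hxδ).2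
        set δ := ‖y - xδ‖ ^ 2 / 2 + PsiFn S y with hδdef
        have hδpos : 0 < δ := by
          have hpsi0 : PsiFn S y = -(‖y - x₀‖ ^ 2 / 2) := psi_eq_of_proj S hS hx₀P
          have hd0 : ‖y - x₀‖ = distS S y := (mem_projS.1 hx₀P).2
          have hlt : ‖y - x₀‖ < ‖y - xδ‖ := by
            have hle' : distS S y ≤ ‖y - xδ‖ := distS_le S hxδS y
            rcases lt_or_eq_of_le hle' with h | h
            · rw [hd0]; exact h
            · exact absurd (mem_projS.2 ⟨hxδS, h.symm⟩) hxδnP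
          have h0 : (0:ℝ) ≤ ‖y - x₀‖ := norm_nonneg _
          rw [hδdef, hpsi0]
          nlinarith
        set B := (r + ‖y‖) * ‖d‖ + ‖d‖ ^ 2 / 2 + 1 with hBdef
        have hBpos : 0 < B := by
          have : 0 ≤ (r + ‖y‖) * ‖d‖ := by positivity
          rw [hBdef]; positivity
        refine ⟨min 1 (δ / (2 * B)), lt_min one_pos (div_pos hδpos (by linarith)), ?_⟩
        intro t ht htle
        have ht1 : t ≤ 1 := le_trans htle (min_le_left _ _)
        have ht2 : t * (2 * B) ≤ δ := by
          have := le_trans htle (min_le_right _ _)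
          rw [le_div_iff₀ (by linarith : (0:ℝ) < 2 * B)] at this
          linarith
        apply psi_le S hS
        intro x hx
        by_cases hxP : x ∈ P
        · exact hPbr t ht x hxP
        · have hxSP : x ∈ S \ P := Finset.mem_sdiff.2 ⟨hx, hxP⟩
          have hδx : ‖y - xδ‖ ^ 2 / 2 ≤ ‖y - x‖ ^ 2 / 2 := hδmin x hxSP
          have hrw : y + t • d - x = (y - x) + t • d := by abel
          have hexp : ‖y + t • d - x‖ ^ 2
              = ‖y - x‖ ^ 2 + 2 * ⟪y - x, t • d⟫ + ‖t • d‖ ^ 2 := by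
            rw [hrw, norm_add_sq_real]
          have hin : ⟪y - x, t • d⟫ = -(t * ⟪x - y, d⟫) := by
            rw [real_inner_smul_right]
            have : ⟪y - x, d⟫ = -⟪x - y, d⟫ := by
              rw [show y - x = -(x - y) by abel, inner_neg_left]
            rw [this]; ring
          have hbx := hB x hx
          have hbm := hB xm hxmS
          have habs1 : ⟪x - y, d⟫ ≤ (r + ‖y‖) * ‖d‖ := le_of_abs_le hbx
          have habs2 : -((r + ‖y‖) * ‖d‖) ≤ m := neg_le_of_abs_le hbm
          have hsq : (0:ℝ) ≤ ‖t • d‖ ^ 2 := sq_nonneg _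
          -- -(‖y+td-x‖²/2) ≤ -(‖y-x‖²/2) + t⟪x-y,d⟫ ≤ PsiFn S y - δ + t(r+‖y‖)‖d‖
          -- ≤ PsiFn S y + t m  since t((r+‖y‖)‖d‖ - m) ≤ 2t(r+‖y‖)‖d‖ ≤ 2tB ≤ δ
          have key : t * ((r + ‖y‖) * ‖d‖) - t * m ≤ δ := by
            have hGB : (r + ‖y‖) * ‖d‖ ≤ B := by
              rw [hBdef]; nlinarith [sq_nonneg ‖d‖]
            have h1' : t * (-m) ≤ t * ((r + ‖y‖) * ‖d‖) :=
              mul_le_mul_of_nonneg_left (by linarith) ht.le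
            have h2' : t * ((r + ‖y‖) * ‖d‖) ≤ t * B :=
              mul_le_mul_of_nonneg_left hGB ht.le
            linarith
          have hxg := mul_le_mul_of_nonneg_left habs1 ht.le
          have e1 : -(‖y + t • d - x‖ ^ 2 / 2)
              = -(‖y - x‖ ^ 2 / 2) + t * ⟪x - y, d⟫ - ‖t • d‖ ^ 2 / 2 := by
            rw [hexp, hin]; ring
          have e2 : δ = ‖y - xδ‖ ^ 2 / 2 + PsiFn S y := hδdef
          clear_value δ B m
          linarith [e1, e2, hδx, key, hsq, hxg]
      · refine ⟨1, one_pos, ?_⟩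
        intro t ht _
        apply psi_le S hS
        intro x hx
        have hxP : x ∈ P := by
          by_contra hxp
          exact hSP ⟨x, Finset.mem_sdiff.2 ⟨hx, hxp⟩⟩
        exact hPbr t ht x hxP
    obtain ⟨t₀, ht₀, hclaim⟩ := hclaim
    -- the path filter
    set F := Filter.map (fun t : ℝ => y + t • d) (nhdsWithin (0:ℝ) (Set.Ioi 0)) with hFdef
    haveI hFne : F.NeBot := Filter.map_neBot
    have hFle : F ≤ nhdsWithin y ({y}ᶜ : Set H) := by
      have htd : Filter.Tendsto (fun t : ℝ => y + t • d)
          (nhdsWithin (0:ℝ) (Set.Ioi 0)) (nhdsWithin y ({y}ᶜ : Set H)) := by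
        rw [tendsto_nhdsWithin_iff]
        constructor
        · have hc : Continuous (fun t : ℝ => y + t • d) :=
            continuous_const.add (continuous_id.smul continuous_const)
          have h0 : Filter.Tendsto (fun t : ℝ => y + t • d) (nhds 0)
              (nhds (y + (0:ℝ) • d)) := hc.tendsto 0
          simp only [zero_smul, add_zero] at h0
          exact h0.mono_left nhdsWithin_le_nhds
        · filter_upwards [self_mem_nhdsWithin] with t ht
          simp only [Set.mem_compl_iff, Set.mem_singleton_iff]
          intro hcontra
          have htd0 : t • d = 0 := by
            have := congrArg (fun v => v - y) hcontra
            simpa [add_sub_cancel_left] using this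
          rcases smul_eq_zero.1 htd0 with h | h
          · exact absurd h (ne_of_gt ht)
          · exact hd h
      exact htd
    -- along the path, the quotient is bounded by `c`
    set c := (m - ⟪ζ, d⟫) / ‖d‖ with hcdef
    have hFev : ∀ᶠ y' in F, q ζ y' ≤ c := by
      rw [hFdef, Filter.eventually_map]
      filter_upwards [Ioc_mem_nhdsGT ht₀] with t ht
      have ht0 : 0 < t := ht.1
      have hyt : y + t • d - y = t • d := by abel
      have hnorm_td : ‖t • d‖ = t * ‖d‖ := by
        rw [norm_smul, Real.norm_eq_abs, abs_of_pos ht0]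
      have hinner_td : ⟪ζ, t • d⟫ = t * ⟪ζ, d⟫ := real_inner_smul_right _ _ _
      have hnum : PsiFn S (y + t • d) - PsiFn S y - t * ⟪ζ, d⟫ ≤ t * (m - ⟪ζ, d⟫) := by
        have := hclaim t ht0 ht.2
        nlinarith
      simp only [hqdef]
      rw [hyt, hnorm_td, hinner_td, hcdef]
      rw [div_le_div_iff₀ (by positivity) hdpos]
      nlinarith [mul_le_mul_of_nonneg_right hnum hdpos.le]
    -- conclude via the liminf hypothesis
    have hsup : 0 ≤ sSup (A ζ) := (hmem_subdiff ζ).1 hζ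
    have hsupc : sSup (A ζ) ≤ c := by
      apply csSup_le (hAne ζ)
      intro a ha
      simp only [hAdef, Set.mem_setOf_eq] at ha
      obtain ⟨y', h1, h2⟩ := ((ha.filter_mono hFle).and hFev).exists
      linarith
    have hc0 : 0 ≤ (m - ⟪ζ, d⟫) / ‖d‖ := by rw [← hcdef]; linarith
    rw [le_div_iff₀ hdpos] at hc0
    linarith
  -- forward inclusion
  have hfwd : subdiff S y ⊆ (fun z => z - y) '' C := by
    intro ζ hζ
    have hzC : ζ + y ∈ C := by
      by_contra hzC
      have hCne : C.Nonempty := ⟨x₀, hx₀C⟩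
      have hCcomp : IsComplete C :=
        ((P.finite_toSet.isCompact_convexHull (𝕜 := ℝ)).isClosed).isComplete
      obtain ⟨p', hp'C, hp'⟩ :=
        exists_norm_eq_iInf_of_complete_convex hCne hCcomp hCconv (ζ + y)
      have hproj := (norm_eq_iInf_iff_real_inner_le_zero hCconv hp'C).1 hp'
      set d := ζ + y - p' with hddef
      have hdne : d ≠ 0 := sub_ne_zero.2 fun h => hzC (h ▸ hp'C)
      obtain ⟨x, hxP, hxineq⟩ := hdir ζ hζ d hdne
      have h1 : ⟪d, x - p'⟫ ≤ 0 := hproj x (subset_convexHull ℝ _ (Finset.mem_coe.2 hxP))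
      have h2 : ⟪ζ + y - x, d⟫ ≤ 0 := by
        have hsplit : ⟪ζ + y - x, d⟫ = ⟪ζ, d⟫ - ⟪x - y, d⟫ := by
          rw [show ζ + y - x = ζ - (x - y) by abel, inner_sub_left]
        linarith
      have hdd : d = (ζ + y - x) + (x - p') := by rw [hddef]; abel
      have hdsq : ‖d‖ ^ 2 ≤ 0 := by
        have e1 : ⟪d, d⟫ = ⟪d, ζ + y - x⟫ + ⟪d, x - p'⟫ := by
          nth_rewrite 2 [hdd]
          exact inner_add_right _ _ _
        have e2 : ⟪d, ζ + y - x⟫ = ⟪ζ + y - x, d⟫ := real_inner_comm _ _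
        have e3 : ‖d‖ ^ 2 = ⟪d, d⟫ := (real_inner_self_eq_norm_sq d).symm
        linarith
      have : 0 < ‖d‖ := norm_pos_iff.2 hdne
      nlinarith
    exact ⟨ζ + y, hzC, by simp⟩
  -- backward inclusion
  have hbwd : ∀ z ∈ C, z - y ∈ subdiff S y := by
    intro z hz
    rw [hmem_subdiff]
    by_contra hcon
    push_neg at hcon
    have hAeps : ∀ ε : ℝ, 0 < ε → -ε ∈ A (z - y) := by
      intro ε hε
      simp only [hAdef, Set.mem_setOf_eq]
      filter_upwards [hev_ne, hev_ball (2 * ε) (by linarith)] with y' hne hball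
      have hwpos : 0 < ‖y' - y‖ := norm_pos_iff.2 (sub_ne_zero.2 hne)
      have hkey := key_ineq S hS y hz y'
      simp only [hqdef]
      rw [le_div_iff₀ hwpos]
      nlinarith [norm_nonneg (y' - y)]
    have hle := le_csSup (hAbdd (z - y)) (hAeps (-sSup (A (z - y)) / 2) (by linarith))
    linarith
  have heq : subdiff S y = (fun z => z - y) '' C :=
    Set.Subset.antisymm hfwd (by rintro ζ ⟨z, hz, rfl⟩; exact hbwd z hz)
  refine ⟨heq, ?_⟩
  intro p hpC hpmin
  refine ⟨by rw [heq]; exact ⟨p, hpC, rfl⟩, ?_, ?_⟩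
  · intro ζ hζ
    rw [heq] at hζ
    obtain ⟨z, hz, rfl⟩ := hζ
    calc ‖p - y‖ = ‖y - p‖ := norm_sub_rev _ _
      _ ≤ ‖y - z‖ := hpmin z hz
      _ = ‖z - y‖ := norm_sub_rev _ _
  · intro ζ hζ hnorm'
    rw [heq] at hζ
    obtain ⟨z, hz, rfl⟩ := hζ
    have hab : ‖y - z‖ = ‖y - p‖ := by
      rw [norm_sub_rev y z, norm_sub_rev y p]
      exact hnorm'
    have hm : (1/2 : ℝ) • p + (1/2 : ℝ) • z ∈ C :=
      hCconv hpC hz (by norm_num) (by norm_num) (by norm_num)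
    have hle := hpmin _ hm
    have hym : y - ((1/2 : ℝ) • p + (1/2 : ℝ) • z)
        = (1/2 : ℝ) • ((y - p) + (y - z)) := by
      module
    have hnm : ‖y - ((1/2 : ℝ) • p + (1/2 : ℝ) • z)‖ = ‖(y - p) + (y - z)‖ / 2 := by
      rw [hym, norm_smul, Real.norm_eq_abs, abs_of_pos (by norm_num : (0:ℝ) < 1/2)]
      ring
    have hpar := parallelogram_law_with_norm ℝ (y - p) (y - z)
    have hzero : ‖(y - p) - (y - z)‖ = 0 := by
      rw [hnm] at hle
      nlinarith [norm_nonneg ((y - p) - (y - z)), norm_nonneg ((y - p) + (y - z)),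
        norm_nonneg (y - p)]
    have hzp : z = p := by
      have : (y - p) - (y - z) = 0 := norm_eq_zero.1 hzero
      have : z - p = 0 := by rw [← this]; abel
      exact sub_eq_zero.1 this
    rw [hzp]

end
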